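/- arXiv:1907.11791 — 3 statements merged into one kernel-verified Lean document; each statement's English description precedes it below -/
import Mathlib

section
/- The Clifford spectrum is independent of the choice of Clifford representation: let $M_1,\dots,M_d$ be Hermitian $n\times n$ matrices, and let $\Gamma_1,\dots,\Gamma_d$ and $\Gamma'_1,\dots,\Gamma'_d$ be two collections of Hermitian matrices (of sizes $m$ and $m'$ respectively) satisfying $\Gamma_j^2 = I$, $\Gamma_j\Gamma_k = -\Gamma_k\Gamma_j$ for $j\neq k$ (and likewise for the $\Gamma'_j$). Then for every $\lambda\in\mathbb{R}^d$, $\sum_j (M_j - \lambda_j I)\otimes \Gamma_j$ is singular if and only if $\sum_j (M_j - \lambda_j I)\otimes \Gamma'_j$ is singular. -/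
open Matrix
open scoped Kronecker symmDiff

section Kron

variable {l : Type*} {p : Type*} [Fintype p]

/-- Partial trace over the second factor. -/
noncomputable def ptr (Z : Matrix (l × p) (l × p) ℂ) : Matrix l l ℂ :=
  Matrix.of fun i i' => ∑ x, Z (i, x) (i', x)

lemma ptr_sum {ι : Type*} (F : Finset ι) (f : ι → Matrix (l × p) (l × p) ℂ) :
    ptr (∑ s ∈ F, f s) = ∑ s ∈ F, ptr (f s) := by
  ext i i'
  simp only [ptr, Matrix.of_apply, Matrix.sum_apply]
  rw [Finset.sum_comm]

lemma ptr_kron (A : Matrix l l ℂ) (B : Matrix p p ℂ) :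
    ptr (A ⊗ₖ B) = B.trace • A := by
  ext i i'
  simp only [ptr, Matrix.of_apply, Matrix.kroneckerMap_apply, Matrix.smul_apply,
    Matrix.trace, Matrix.diag, smul_eq_mul]
  rw [Finset.sum_mul]
  exact Finset.sum_congr rfl fun x _ => mul_comm _ _

lemma sum_kron {ι m : Type*} [Fintype m] (F : Finset ι) (f : ι → Matrix l l ℂ)
    (B : Matrix m m ℂ) : (∑ s ∈ F, f s) ⊗ₖ B = ∑ s ∈ F, (f s ⊗ₖ B) := by
  classical
  induction F using Finset.induction_on with
  | empty => simp [Matrix.zero_kronecker]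
  | insert _ _ hnot ih =>
    rw [Finset.sum_insert hnot, Finset.sum_insert hnot, Matrix.add_kronecker, ih]

end Kron

section Gprod
variable {D : ℕ} {p : Type*} [Fintype p] [DecidableEq p]
variable (Γ : Fin D → Matrix p p ℂ)

/-- Ordered product of the `Γ j` for `j ∈ S`. -/
noncomputable def gprod (S : Finset (Fin D)) : Matrix p p ℂ :=
  ((S.sort (· ≤ ·)).map Γ).prod

@[simp] lemma gprod_empty : gprod Γ ∅ = 1 := by simp [gprod]

@[simp] lemma gprod_singleton (j : Fin D) : gprod Γ {j} = Γ j := by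
  simp [gprod, Finset.sort_singleton]

lemma gprod_insert_of_lt {i : Fin D} {S : Finset (Fin D)} (h : ∀ s ∈ S, i < s) :
    gprod Γ (insert i S) = Γ i * gprod Γ S := by
  have hi : i ∉ S := fun hmem => lt_irrefl i (h i hmem)
  rw [gprod, Finset.sort_insert _ (fun b hb => (h b hb).le) hi]
  simp [gprod]

lemma gprod_min_peel {S : Finset (Fin D)} (hS : S.Nonempty) :
    gprod Γ S = Γ (S.min' hS) * gprod Γ (S.erase (S.min' hS)) := by
  set i := S.min' hS with hi
  have : S = insert i (S.erase i) := by
    rw [Finset.insert_erase (S.min'_mem hS)]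
  conv_lhs => rw [this]
  exact gprod_insert_of_lt Γ (fun s hs => by
    rcases Finset.mem_erase.mp hs with ⟨hne, hmem⟩
    exact lt_of_le_of_ne (S.min'_le s hmem) (Ne.symm hne))

variable (hsq : ∀ j, Γ j * Γ j = 1)
variable (hanti : ∀ j k, j ≠ k → Γ j * Γ k = -(Γ k * Γ j))

include hsq hanti in
/-- Left multiplication by a generator, with explicit sign. -/
lemma gprod_gen_mul (j : Fin D) (S : Finset (Fin D)) :
    Γ j * gprod Γ S =
      ((-1 : ℂ) ^ ((S.filter (· < j)).card)) • gprod Γ ({j} ∆ S) := by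
  classical
  induction S using Finset.strongInduction with
  | _ S IH =>
  by_cases hlt : ∀ s ∈ S, j < s
  · -- j below everything in S (includes S = ∅)
    have hfilter : S.filter (· < j) = ∅ := by
      apply Finset.filter_eq_empty_iff.mpr
      intro s hs
      exact not_lt.mpr (hlt s hs).le
    have hsd : {j} ∆ S = insert j S := by
      ext s
      simp only [Finset.mem_symmDiff, Finset.mem_singleton, Finset.mem_insert]
      constructor
      · rintro (⟨rfl, -⟩ | ⟨h1, h2⟩) <;> tauto
      · rintro (rfl | hs)
        · exact Or.inl ⟨rfl, fun h => lt_irrefl _ (hlt _ h)⟩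
        · exact Or.inr ⟨hs, fun h => lt_irrefl _ (h ▸ hlt s hs)⟩
    rw [hfilter, hsd, gprod_insert_of_lt Γ hlt]
    simp
  · have hS : S.Nonempty := by
      rcases S.eq_empty_or_nonempty with rfl | h
      · exact absurd (by simp) hlt
      · exact h
    set i := S.min' hS with hidef
    have himem : i ∈ S := S.min'_mem hS
    have hmin : ∀ s ∈ S, i ≤ s := fun s hs => S.min'_le s hs
    set S' := S.erase i with hS'def
    have hiS' : i ∉ S' := Finset.notMem_erase i S
    have hS'lt : ∀ s ∈ S', i < s := fun s hs => by
      rcases Finset.mem_erase.mp hs with ⟨hne, hmem⟩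
      exact lt_of_le_of_ne (hmin s hmem) (Ne.symm hne)
    have hpeel : gprod Γ S = Γ i * gprod Γ S' := gprod_min_peel Γ hS
    have hssub : S' ⊂ S := Finset.erase_ssubset himem
    by_cases hji : j = i
    · -- j is the minimum of S
      have hsd : {i} ∆ S = S' := by
        ext s
        simp only [Finset.mem_symmDiff, Finset.mem_singleton, hS'def,
          Finset.mem_erase]
        constructor
        · rintro (⟨rfl, hns⟩ | ⟨h1, h2⟩)
          · exact absurd himem hns
          · exact ⟨h2, h1⟩
        · rintro ⟨h1, h2⟩; exact Or.inr ⟨h2, h1⟩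
      have hfilter : S.filter (· < i) = ∅ := by
        apply Finset.filter_eq_empty_iff.mpr
        intro s hs
        exact not_lt.mpr (hmin s hs)
      rw [hji, hpeel, ← mul_assoc, hsq i, one_mul, hsd, hfilter]
      simp
    · -- j is not the minimum; and since ¬(∀ s∈S, j < s), we get i < j
      have hij : i < j := by
        push_neg at hlt
        rcases hlt with ⟨s, hs, hsle⟩
        exact lt_of_le_of_ne (le_trans (hmin s hs) hsle) (Ne.symm hji)
      have IH' := IH S' hssub
      have key : Γ j * gprod Γ S
          = -((-1 : ℂ) ^ ((S'.filter (· < j)).card)) •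
              (Γ i * gprod Γ ({j} ∆ S')) := by
        rw [hpeel, ← mul_assoc, hanti j i hji, neg_mul, mul_assoc, IH']
        rw [Matrix.mul_smul, neg_smul, ← neg_smul]
      have hins : ∀ s ∈ {j} ∆ S', i < s := by
        intro s hs
        rcases Finset.mem_symmDiff.mp hs with ⟨hs1, -⟩ | ⟨hs1, -⟩
        · rw [Finset.mem_singleton.mp hs1]; exact hij
        · exact hS'lt s hs1
      have hsd : insert i ({j} ∆ S') = {j} ∆ S := by
        ext s
        simp only [Finset.mem_insert, Finset.mem_symmDiff, Finset.mem_singleton,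
          hS'def, Finset.mem_erase]
        constructor
        · rintro (rfl | ⟨rfl, hns⟩ | ⟨h1, h2⟩)
          · exact Or.inr ⟨himem, fun h => hji (h.symm)⟩
          · exact Or.inl ⟨rfl, fun h => hns ⟨hji, h⟩⟩
          · exact Or.inr ⟨h1.2, h2⟩
        · rintro (⟨rfl, hns⟩ | ⟨h1, h2⟩)
          · exact Or.inr (Or.inl ⟨rfl, fun ⟨_, h⟩ => hns h⟩)
          · by_cases hsi : s = i
            · exact Or.inl hsi
            · exact Or.inr (Or.inr ⟨⟨hsi, h1⟩, h2⟩)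
      have hcard : (S.filter (· < j)).card = (S'.filter (· < j)).card + 1 := by
        have : S.filter (· < j) = insert i (S'.filter (· < j)) := by
          ext s
          simp only [Finset.mem_filter, Finset.mem_insert, hS'def, Finset.mem_erase]
          constructor
          · rintro ⟨hs, hlt'⟩
            by_cases hsi : s = i
            · exact Or.inl hsi
            · exact Or.inr ⟨⟨hsi, hs⟩, hlt'⟩
          · rintro (rfl | ⟨⟨-, hs⟩, hlt'⟩)
            · exact ⟨himem, hij⟩
            · exact ⟨hs, hlt'⟩
        rw [this, Finset.card_insert_of_notMem (fun h => hiS' (Finset.mem_filter.mp h).1)]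
      rw [key, ← gprod_insert_of_lt Γ hins, hsd, hcard, pow_succ, mul_neg_one]

include hsq hanti in
/-- Commutation of a generator past a product, with explicit sign. -/
lemma gprod_gen_comm (j : Fin D) (S : Finset (Fin D)) :
    Γ j * gprod Γ S = ((-1 : ℂ) ^ ((S.erase j).card)) • (gprod Γ S * Γ j) := by
  classical
  induction S using Finset.strongInduction with
  | _ S IH =>
  rcases S.eq_empty_or_nonempty with rfl | hS
  · simp
  set i := S.min' hS with hidef
  have himem : i ∈ S := S.min'_mem hS
  set S' := S.erase i with hS'def
  have hiS' : i ∉ S' := Finset.notMem_erase i S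
  have hpeel : gprod Γ S = Γ i * gprod Γ S' := gprod_min_peel Γ hS
  have hssub : S' ⊂ S := Finset.erase_ssubset himem
  have IH' := IH S' hssub
  by_cases hji : j = i
  · have hSej : S.erase j = S' := by rw [hji]
    have hS'ej : S'.erase j = S' := by
      rw [Finset.erase_eq_self.mpr]
      rw [hji]; exact hiS'
    have hone : ((-1 : ℂ)) ^ (S'.card + S'.card) = 1 := by
      exact Even.neg_one_pow (Even.add_self _)
    rw [hSej]
    rw [hS'ej] at IH'
    rw [hji] at IH' ⊢
    rw [hpeel, ← mul_assoc, hsq i, one_mul, IH', Matrix.smul_mul, smul_smul,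
      mul_assoc, hsq i, mul_one, ← pow_add, hone, one_smul]
  · have hcard : (S.erase j).card = (S'.erase j).card + 1 := by
      have : S.erase j = insert i (S'.erase j) := by
        ext s
        simp only [Finset.mem_erase, Finset.mem_insert, hS'def]
        constructor
        · rintro ⟨hsj, hs⟩
          by_cases hsi : s = i
          · exact Or.inl hsi
          · exact Or.inr ⟨hsj, hsi, hs⟩
        · rintro (rfl | ⟨hsj, -, hs⟩)
          · exact ⟨fun h => hji h.symm, himem⟩
          · exact ⟨hsj, hs⟩
      rw [this, Finset.card_insert_of_notMem
        (fun h => hiS' (Finset.mem_erase.mp h).2)]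
    rw [hpeel, ← mul_assoc, hanti j i hji, neg_mul, mul_assoc, IH',
      Matrix.mul_smul, hcard, pow_succ, mul_neg_one, neg_smul, neg_inj,
      mul_assoc]

include hsq hanti in
/-- Products of `gprod`s are `gprod`s of symmetric differences, up to sign. -/
lemma gprod_mul_gprod (S T : Finset (Fin D)) :
    ∃ ε : ℂ, (ε = 1 ∨ ε = -1) ∧ gprod Γ S * gprod Γ T = ε • gprod Γ (S ∆ T) := by
  classical
  induction S using Finset.strongInduction with
  | _ S IH =>
  rcases S.eq_empty_or_nonempty with rfl | hS
  · refine ⟨1, Or.inl rfl, ?_⟩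
    have h0 : (∅ : Finset (Fin D)) ∆ T = T := by
      ext s; simp [Finset.mem_symmDiff]
    rw [h0, gprod_empty, one_mul, one_smul]
  set i := S.min' hS with hidef
  have himem : i ∈ S := S.min'_mem hS
  set S' := S.erase i with hS'def
  have hiS' : i ∉ S' := Finset.notMem_erase i S
  have hpeel : gprod Γ S = Γ i * gprod Γ S' := gprod_min_peel Γ hS
  obtain ⟨ε, hε, hmul⟩ := IH S' (Finset.erase_ssubset himem)
  refine ⟨ε * (-1 : ℂ) ^ (((S' ∆ T).filter (· < i)).card), ?_, ?_⟩
  · rcases hε with rfl | rfl <;>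
      rcases neg_one_pow_eq_or ℂ (((S' ∆ T).filter (· < i)).card) with h | h <;>
      rw [h] <;> simp
  · have hins : ({i} : Finset (Fin D)) ∆ S' = S := by
      ext s
      simp only [Finset.mem_symmDiff, Finset.mem_singleton, hS'def, Finset.mem_erase]
      constructor
      · rintro (⟨rfl, -⟩ | ⟨⟨-, h⟩, -⟩)
        · exact himem
        · exact h
      · intro hs
        by_cases hsi : s = i
        · exact Or.inl ⟨hsi, fun h => h.1 hsi⟩
        · exact Or.inr ⟨⟨hsi, hs⟩, hsi⟩
    have hassoc : ({i} : Finset (Fin D)) ∆ (S' ∆ T) = S ∆ T := by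
      rw [← symmDiff_assoc, hins]
    rw [hpeel, mul_assoc, hmul, Matrix.mul_smul,
      gprod_gen_mul Γ hsq hanti i (S' ∆ T), hassoc, smul_smul, mul_comm ε]

include hsq hanti in
/-- In even rank, nontrivial products of generators are traceless. -/
lemma gprod_trace_zero (hD : Even D) {S : Finset (Fin D)} (hS : S ≠ ∅) :
    trace (gprod Γ S) = 0 := by
  classical
  have hne : S.Nonempty := Finset.nonempty_iff_ne_empty.mpr hS
  obtain ⟨j, hj⟩ : ∃ j : Fin D, Odd ((S.erase j).card) := by
    by_cases hc : Even S.card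
    · obtain ⟨j, hjmem⟩ := hne
      refine ⟨j, ?_⟩
      rw [Finset.card_erase_of_mem hjmem]
      have hpos : 0 < S.card := Finset.card_pos.mpr ⟨j, hjmem⟩
      exact Nat.Even.sub_odd hpos hc odd_one
    · have hodd : Odd S.card := by
        rcases Nat.even_or_odd S.card with h | h
        · exact absurd h hc
        · exact h
      have hSu : S ≠ Finset.univ := by
        intro h
        rw [h, Finset.card_univ, Fintype.card_fin] at hc
        exact hc hD
      obtain ⟨j, hjnot⟩ : ∃ j, j ∉ S := by
        by_contra hall
        push_neg at hall
        exact hSu (Finset.eq_univ_iff_forall.mpr hall)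
      refine ⟨j, ?_⟩
      rw [Finset.erase_eq_self.mpr hjnot]
      exact hodd
  have hcomm := gprod_gen_comm Γ hsq hanti j S
  rw [Odd.neg_one_pow hj, neg_one_smul] at hcomm
  have h1 : trace (gprod Γ S) = trace (Γ j * (Γ j * gprod Γ S)) := by
    rw [← mul_assoc, hsq j, one_mul]
  rw [hcomm] at h1
  have h2 : trace (Γ j * -(gprod Γ S * Γ j)) = -trace (gprod Γ S) := by
    rw [mul_neg, trace_neg, trace_mul_comm, mul_assoc, hsq j, mul_one]
  rw [h2] at h1
  have h3 : (2 : ℂ) • trace (gprod Γ S) = 0 := by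
    rw [two_smul]
    exact add_eq_zero_iff_eq_neg.mpr h1
  have h4 := smul_eq_zero.mp h3
  rcases h4 with h | h
  · norm_num at h
  · exact h

end Gprod


section Indep
variable {n D : ℕ} {p : Type*} [Fintype p] [DecidableEq p] [Nonempty p]
variable (Γ : Fin D → Matrix p p ℂ)
variable (hsq : ∀ j, Γ j * Γ j = 1)
variable (hanti : ∀ j k, j ≠ k → Γ j * Γ k = -(Γ k * Γ j))

include hsq hanti in
lemma kron_gprod_indep (hD : Even D) (C : Finset (Fin D) → Matrix (Fin n) (Fin n) ℂ)
    (h : ∑ S : Finset (Fin D), C S ⊗ₖ gprod Γ S = 0) (T : Finset (Fin D)) :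
    C T = 0 := by
  classical
  have h2 : ∑ S : Finset (Fin D), C S ⊗ₖ (gprod Γ S * gprod Γ T) = 0 := by
    have := congrArg (· * ((1 : Matrix (Fin n) (Fin n) ℂ) ⊗ₖ gprod Γ T)) h
    simp only [zero_mul, Finset.sum_mul] at this
    rw [← this]
    exact Finset.sum_congr rfl fun S _ => by
      rw [← Matrix.mul_kronecker_mul, mul_one]
  have h3 : ∑ S : Finset (Fin D), (gprod Γ S * gprod Γ T).trace • C S = 0 := by
    have := congrArg ptr h2
    rw [ptr_sum] at this
    simp only [ptr_kron] at this
    have hptr0 : ptr (0 : Matrix ((Fin n) × p) ((Fin n) × p) ℂ) = 0 := by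
      ext i i'
      simp [ptr]
    rw [hptr0] at this
    exact this
  obtain ⟨ε, hε, hTT⟩ := gprod_mul_gprod Γ hsq hanti T T
  have hTT' : (gprod Γ T * gprod Γ T).trace = ε * (Fintype.card p : ℂ) := by
    rw [hTT, symmDiff_self, Finset.bot_eq_empty, gprod_empty, trace_smul,
      trace_one, smul_eq_mul]
  have hz : ∀ S : Finset (Fin D), S ≠ T → (gprod Γ S * gprod Γ T).trace • C S = 0 := by
    intro S hST
    obtain ⟨ε', hε', hST'⟩ := gprod_mul_gprod Γ hsq hanti S T
    have hne : S ∆ T ≠ ∅ := fun hb => hST (symmDiff_eq_bot.mp hb)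
    rw [hST', trace_smul, gprod_trace_zero Γ hsq hanti hD hne, smul_zero,
      zero_smul]
  rw [Finset.sum_eq_single T (fun S _ hST => hz S hST) (by simp)] at h3
  rw [hTT'] at h3
  have hεne : ε * (Fintype.card p : ℂ) ≠ 0 := by
    apply mul_ne_zero
    · rcases hε with rfl | rfl <;> norm_num
    · simp [Fintype.card_ne_zero]
  exact (smul_eq_zero.mp h3).resolve_left hεne

/-- Representation-independent coefficients of the powers of the localizer. -/
noncomputable def Bco (a : Fin D → Matrix (Fin n) (Fin n) ℂ) :
    ℕ → Finset (Fin D) → Matrix (Fin n) (Fin n) ℂ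
  | 0, S => if S = ∅ then 1 else 0
  | k + 1, T => ∑ j, ((-1 : ℂ) ^ ((T.filter (· < j)).card)) •
      (a j * Bco a k ({j} ∆ T))

lemma filter_lt_symmDiff (j : Fin D) (T : Finset (Fin D)) :
    (({j} ∆ T).filter (· < j)) = T.filter (· < j) := by
  ext s
  simp only [Finset.mem_filter, Finset.mem_symmDiff, Finset.mem_singleton]
  constructor
  · rintro ⟨(⟨rfl, -⟩ | ⟨h1, -⟩), hlt⟩
    · exact absurd hlt (lt_irrefl _)
    · exact ⟨h1, hlt⟩
  · rintro ⟨hs, hlt⟩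
    exact ⟨Or.inr ⟨hs, fun h => absurd (h ▸ hlt) (lt_irrefl _)⟩, hlt⟩

include hsq hanti in
lemma pow_expand (a : Fin D → Matrix (Fin n) (Fin n) ℂ) (k : ℕ) :
    (∑ j, a j ⊗ₖ Γ j) ^ k = ∑ S : Finset (Fin D), (Bco a k S) ⊗ₖ gprod Γ S := by
  classical
  induction k with
  | zero =>
    rw [pow_zero, Finset.sum_eq_single ∅ (fun S _ hS => by
        simp [Bco, hS, Matrix.zero_kronecker]) (by simp)]
    simp [Bco, Matrix.one_kronecker_one]
  | succ k IH =>
    rw [pow_succ', IH, Finset.sum_mul_sum]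
    have step1 : ∀ (j : Fin D) (S : Finset (Fin D)),
        (a j ⊗ₖ Γ j) * ((Bco a k S) ⊗ₖ gprod Γ S)
          = ((-1 : ℂ) ^ ((S.filter (· < j)).card)) •
              ((a j * Bco a k S) ⊗ₖ gprod Γ ({j} ∆ S)) := by
      intro j S
      rw [← Matrix.mul_kronecker_mul, gprod_gen_mul Γ hsq hanti j S,
        Matrix.kronecker_smul]
    simp only [step1]
    have rhs : ∀ T : Finset (Fin D),
        Bco a (k + 1) T ⊗ₖ gprod Γ T
          = ∑ j, ((-1 : ℂ) ^ ((T.filter (· < j)).card)) •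
              ((a j * Bco a k ({j} ∆ T)) ⊗ₖ gprod Γ T) := by
      intro T
      show (∑ j, ((-1 : ℂ) ^ ((T.filter (· < j)).card)) •
          (a j * Bco a k (({j} : Finset (Fin D)) ∆ T))) ⊗ₖ gprod Γ T = _
      rw [sum_kron]
      exact Finset.sum_congr rfl fun j _ => by rw [Matrix.smul_kronecker]
    simp only [rhs]
    conv_rhs => rw [Finset.sum_comm]
    refine Finset.sum_congr rfl fun j _ => ?_
    have hinv : Function.Involutive (fun S : Finset (Fin D) => ({j} : Finset (Fin D)) ∆ S) :=
      fun S => symmDiff_symmDiff_cancel_left ({j} : Finset (Fin D)) S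
    refine Fintype.sum_equiv hinv.toPerm _ _ fun S => ?_
    simp only [Function.Involutive.coe_toPerm]
    rw [filter_lt_symmDiff, symmDiff_symmDiff_cancel_left]

include hsq hanti in
lemma aeval_expand (a : Fin D → Matrix (Fin n) (Fin n) ℂ) (q : Polynomial ℂ) :
    Polynomial.aeval (∑ j, a j ⊗ₖ Γ j) q
      = ∑ S : Finset (Fin D),
          (∑ k ∈ Finset.range (q.natDegree + 1), q.coeff k • Bco a k S) ⊗ₖ
            gprod Γ S := by
  classical
  rw [Polynomial.aeval_eq_sum_range]
  have h1 : ∀ k, q.coeff k • (∑ j, a j ⊗ₖ Γ j) ^ k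
      = ∑ S : Finset (Fin D), (q.coeff k • Bco a k S) ⊗ₖ gprod Γ S := by
    intro k
    rw [pow_expand Γ hsq hanti a k, Finset.smul_sum]
    exact Finset.sum_congr rfl fun S _ => by rw [Matrix.smul_kronecker]
  simp only [h1]
  rw [Finset.sum_comm]
  exact Finset.sum_congr rfl fun S _ => by rw [sum_kron]

end Indep

section Transfer

/-- The key transfer lemma: for even rank, invertibility of the localizer
does not depend on the Clifford representation. -/
lemma transfer_isUnit {n D : ℕ} {p p' : Type*}
    [Fintype p] [DecidableEq p] [Nonempty p]
    [Fintype p'] [DecidableEq p'] [Nonempty p']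
    (hD : Even D) (a : Fin D → Matrix (Fin n) (Fin n) ℂ)
    (Γ : Fin D → Matrix p p ℂ)
    (hsq : ∀ j, Γ j * Γ j = 1)
    (hanti : ∀ j k, j ≠ k → Γ j * Γ k = -(Γ k * Γ j))
    (Γ' : Fin D → Matrix p' p' ℂ)
    (hsq' : ∀ j, Γ' j * Γ' j = 1)
    (hanti' : ∀ j k, j ≠ k → Γ' j * Γ' k = -(Γ' k * Γ' j))
    (h : IsUnit (∑ j, a j ⊗ₖ Γ j)) : IsUnit (∑ j, a j ⊗ₖ Γ' j) := by
  classical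
  set L := ∑ j, a j ⊗ₖ Γ j with hL
  set L' := ∑ j, a j ⊗ₖ Γ' j with hL'
  set q := L.charpoly with hq
  have hdet : IsUnit L.det := (Matrix.isUnit_iff_isUnit_det L).mp h
  have hq0 : q.coeff 0 ≠ 0 := by
    intro h0
    rw [Matrix.det_eq_sign_charpoly_coeff, ← hq, h0, mul_zero] at hdet
    exact (not_isUnit_zero : ¬ IsUnit (0 : ℂ)) hdet
  have haeval : Polynomial.aeval L q = 0 := Matrix.aeval_self_charpoly L
  have hcoeffs : ∀ S : Finset (Fin D),
      ∑ k ∈ Finset.range (q.natDegree + 1), q.coeff k • Bco a k S = 0 := by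
    apply kron_gprod_indep Γ hsq hanti hD
    rw [← aeval_expand Γ hsq hanti a q, ← hL, haeval]
  have haeval' : Polynomial.aeval L' q = 0 := by
    rw [hL', aeval_expand Γ' hsq' hanti' a q]
    simp only [hcoeffs]
    simp [Matrix.zero_kronecker]
  -- now conclude that `L'` is a unit
  have hsplit := congrArg (Polynomial.aeval L') (Polynomial.X_mul_divX_add q)
  rw [map_add, _root_.map_mul, Polynomial.aeval_X, Polynomial.aeval_C, haeval'] at hsplit
  have hkey : L' * Polynomial.aeval L' q.divX = -(q.coeff 0 • 1) := by
    have := hsplit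
    rw [Algebra.algebraMap_eq_smul_one] at this
    linear_combination (norm := noncomm_ring) this
  have hone : L' * ((-(q.coeff 0))⁻¹ • Polynomial.aeval L' q.divX) = 1 := by
    rw [Matrix.mul_smul, hkey, ← neg_smul, smul_smul,
      inv_mul_cancel₀ (neg_ne_zero.mpr hq0), one_smul]
  exact @isUnit_of_invertible _ _ L' (invertibleOfRightInverse _ _ hone)

end Transfer

section Padding

lemma kron_neg {l m o q : Type*} (A : Matrix l m ℂ) (B : Matrix o q ℂ) :
    A ⊗ₖ (-B) = -(A ⊗ₖ B) := by
  ext ⟨i, x⟩ ⟨i', x'⟩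
  simp [Matrix.kroneckerMap_apply, mul_neg]

lemma neg_kron {l m o q : Type*} (A : Matrix l m ℂ) (B : Matrix o q ℂ) :
    (-A) ⊗ₖ B = -(A ⊗ₖ B) := by
  ext ⟨i, x⟩ ⟨i', x'⟩
  simp [Matrix.kroneckerMap_apply, neg_mul]

noncomputable def sigX : Matrix (Fin 2) (Fin 2) ℂ := !![0, 1; 1, 0]
noncomputable def sigZ : Matrix (Fin 2) (Fin 2) ℂ := !![1, 0; 0, -1]

lemma sigX_mul_sigX : sigX * sigX = 1 := by
  ext i j
  fin_cases i <;> fin_cases j <;>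
    simp [sigX, Matrix.mul_apply, Fin.sum_univ_two, Matrix.one_apply]

lemma sigZ_mul_sigZ : sigZ * sigZ = 1 := by
  ext i j
  fin_cases i <;> fin_cases j <;>
    simp [sigZ, Matrix.mul_apply, Fin.sum_univ_two, Matrix.one_apply]

lemma sigX_mul_sigZ : sigX * sigZ = -(sigZ * sigX) := by
  ext i j
  fin_cases i <;> fin_cases j <;>
    simp [sigX, sigZ, Matrix.mul_apply, Fin.sum_univ_two]

variable {d : ℕ} {p : Type*} [Fintype p] [DecidableEq p]

/-- Padding a Clifford family by one extra generator. -/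
noncomputable def pad (Γ : Fin d → Matrix p p ℂ) :
    Fin (d + 1) → Matrix (Fin 2 × p) (Fin 2 × p) ℂ :=
  Fin.snoc (fun j => sigX ⊗ₖ Γ j) (sigZ ⊗ₖ (1 : Matrix p p ℂ))

lemma pad_sq (Γ : Fin d → Matrix p p ℂ) (hsq : ∀ j, Γ j * Γ j = 1) :
    ∀ j, pad Γ j * pad Γ j = 1 := by
  intro j
  induction j using Fin.lastCases with
  | last =>
    simp only [pad, Fin.snoc_last]
    rw [← Matrix.mul_kronecker_mul, sigZ_mul_sigZ, one_mul,
      Matrix.one_kronecker_one]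
  | cast j =>
    simp only [pad, Fin.snoc_castSucc]
    rw [← Matrix.mul_kronecker_mul, sigX_mul_sigX, hsq j,
      Matrix.one_kronecker_one]

lemma pad_anti (Γ : Fin d → Matrix p p ℂ)
    (hanti : ∀ j k, j ≠ k → Γ j * Γ k = -(Γ k * Γ j)) :
    ∀ j k, j ≠ k → pad Γ j * pad Γ k = -(pad Γ k * pad Γ j) := by
  intro j k hjk
  induction j using Fin.lastCases with
  | last =>
    induction k using Fin.lastCases with
    | last => exact absurd rfl hjk
    | cast k =>
      simp only [pad, Fin.snoc_last, Fin.snoc_castSucc]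
      rw [← Matrix.mul_kronecker_mul, ← Matrix.mul_kronecker_mul, one_mul,
        mul_one, sigX_mul_sigZ, neg_kron, neg_neg]
  | cast j =>
    induction k using Fin.lastCases with
    | last =>
      simp only [pad, Fin.snoc_last, Fin.snoc_castSucc]
      rw [← Matrix.mul_kronecker_mul, ← Matrix.mul_kronecker_mul, one_mul,
        mul_one, sigX_mul_sigZ, neg_kron]
    | cast k =>
      have hjk' : j ≠ k := fun h => hjk (by rw [h])
      simp only [pad, Fin.snoc_castSucc]
      rw [← Matrix.mul_kronecker_mul, ← Matrix.mul_kronecker_mul,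
        sigX_mul_sigX, hanti j k hjk', kron_neg]

lemma algEquiv_isUnit {α β : Type*} [Ring α] [Ring β] [Algebra ℂ α] [Algebra ℂ β]
    (f : α ≃ₐ[ℂ] β) (x : α) :
    IsUnit x ↔ IsUnit (f x) := by
  constructor
  · exact fun h => h.map f.toAlgHom.toRingHom
  · intro h
    have := h.map f.symm.toAlgHom.toRingHom
    simpa using this

lemma pad_isUnit {n : ℕ} (a : Fin d → Matrix (Fin n) (Fin n) ℂ)
    (Γ : Fin d → Matrix p p ℂ) :
    IsUnit (∑ j, (Fin.snoc a 0 : Fin (d + 1) → Matrix (Fin n) (Fin n) ℂ) j ⊗ₖ pad Γ j)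
      ↔ IsUnit (∑ j, a j ⊗ₖ Γ j) := by
  classical
  have hLt : (∑ j, (Fin.snoc a 0 : Fin (d + 1) → Matrix (Fin n) (Fin n) ℂ) j ⊗ₖ pad Γ j)
      = ∑ j : Fin d, a j ⊗ₖ (sigX ⊗ₖ Γ j) := by
    rw [Fin.sum_univ_castSucc]
    simp only [pad, Fin.snoc_castSucc, Fin.snoc_last, Matrix.zero_kronecker, add_zero]
  rw [hLt]
  set R : Matrix (Fin n × (Fin 2 × p)) (Fin n × (Fin 2 × p)) ℂ :=
    (1 : Matrix (Fin n) (Fin n) ℂ) ⊗ₖ (sigX ⊗ₖ (1 : Matrix p p ℂ)) with hR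
  have hRR : R * R = 1 := by
    rw [hR, ← Matrix.mul_kronecker_mul, ← Matrix.mul_kronecker_mul, one_mul,
      sigX_mul_sigX, one_mul, Matrix.one_kronecker_one, Matrix.one_kronecker_one]
  have hRunit : IsUnit R := @isUnit_of_invertible _ _ R (invertibleOfRightInverse _ _ hRR)
  have hstep1 : IsUnit (∑ j : Fin d, a j ⊗ₖ (sigX ⊗ₖ Γ j))
      ↔ IsUnit ((∑ j : Fin d, a j ⊗ₖ (sigX ⊗ₖ Γ j)) * R) := by
    constructor
    · exact fun h => h.mul hRunit
    · intro h
      have := h.mul hRunit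
      rwa [mul_assoc, hRR, mul_one] at this
  rw [hstep1]
  have hX : (∑ j : Fin d, a j ⊗ₖ (sigX ⊗ₖ Γ j)) * R
      = ∑ j : Fin d, a j ⊗ₖ ((1 : Matrix (Fin 2) (Fin 2) ℂ) ⊗ₖ Γ j) := by
    rw [Finset.sum_mul]
    refine Finset.sum_congr rfl fun j _ => ?_
    rw [hR, ← Matrix.mul_kronecker_mul, mul_one, ← Matrix.mul_kronecker_mul,
      mul_one, sigX_mul_sigX]
  rw [hX]
  set e : (Fin n × (Fin 2 × p)) ≃ (Fin 2 × (Fin n × p)) :=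
    ⟨fun x => (x.2.1, (x.1, x.2.2)), fun y => (y.2.1, (y.1, y.2.2)),
      fun x => rfl, fun y => rfl⟩ with he
  rw [algEquiv_isUnit (Matrix.reindexAlgEquiv ℂ ℂ e) _]
  have hre : (Matrix.reindexAlgEquiv ℂ ℂ e)
        (∑ j : Fin d, a j ⊗ₖ ((1 : Matrix (Fin 2) (Fin 2) ℂ) ⊗ₖ Γ j))
      = (1 : Matrix (Fin 2) (Fin 2) ℂ) ⊗ₖ (∑ j : Fin d, a j ⊗ₖ Γ j) := by
    ext ⟨s, i, x⟩ ⟨s', i', x'⟩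
    simp only [Matrix.reindexAlgEquiv_apply, Matrix.reindex_apply,
      Matrix.submatrix_apply, Matrix.sum_apply, Matrix.kroneckerMap_apply, he,
      Equiv.coe_fn_symm_mk]
    rw [Finset.mul_sum]
    exact Finset.sum_congr rfl fun j _ => by ring
  rw [hre, Matrix.isUnit_iff_isUnit_det, Matrix.det_kronecker, det_one, one_pow,
    one_mul, Fintype.card_fin, isUnit_pow_iff (by norm_num : (2 : ℕ) ≠ 0),
    ← Matrix.isUnit_iff_isUnit_det]

end Padding

/-- the Clifford spectrum is independent of the choice of (nontrivial)
Clifford representation: the localizer built from `Γ` is singular iff the one built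
from `Γ'` is. -/
theorem cliffordSpectrum_rep_independent {n d m m' : ℕ} (hm : 0 < m) (hm' : 0 < m')
    (M : Fin d → Matrix (Fin n) (Fin n) ℂ) (hM : ∀ j, (M j).IsHermitian)
    (Γ : Fin d → Matrix (Fin m) (Fin m) ℂ)
    (hΓherm : ∀ j, (Γ j).IsHermitian) (hΓsq : ∀ j, Γ j * Γ j = 1)
    (hΓanti : ∀ j k, j ≠ k → Γ j * Γ k = -(Γ k * Γ j))
    (Γ' : Fin d → Matrix (Fin m') (Fin m') ℂ)
    (hΓ'herm : ∀ j, (Γ' j).IsHermitian) (hΓ'sq : ∀ j, Γ' j * Γ' j = 1)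
    (hΓ'anti : ∀ j k, j ≠ k → Γ' j * Γ' k = -(Γ' k * Γ' j))
    (lam : Fin d → ℝ) :
    IsUnit (∑ j, (M j - (lam j : ℂ) • 1) ⊗ₖ Γ j) ↔
      IsUnit (∑ j, (M j - (lam j : ℂ) • 1) ⊗ₖ Γ' j) := by
  classical
  haveI : Nonempty (Fin m) := ⟨⟨0, hm⟩⟩
  haveI : Nonempty (Fin m') := ⟨⟨0, hm'⟩⟩
  set a : Fin d → Matrix (Fin n) (Fin n) ℂ := fun j => M j - (lam j : ℂ) • 1 with ha
  rcases Nat.even_or_odd d with hd | hd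
  · exact ⟨fun h => transfer_isUnit hd a Γ hΓsq hΓanti Γ' hΓ'sq hΓ'anti h,
      fun h => transfer_isUnit hd a Γ' hΓ'sq hΓ'anti Γ hΓsq hΓanti h⟩
  · have hD : Even (d + 1) := Odd.add_one hd
    rw [show (∑ j, (M j - (lam j : ℂ) • 1) ⊗ₖ Γ j) = ∑ j, a j ⊗ₖ Γ j from rfl,
      show (∑ j, (M j - (lam j : ℂ) • 1) ⊗ₖ Γ' j) = ∑ j, a j ⊗ₖ Γ' j from rfl,
      ← pad_isUnit a Γ, ← pad_isUnit a Γ']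
    exact ⟨fun h => transfer_isUnit hD (Fin.snoc a 0) (pad Γ) (pad_sq Γ hΓsq)
        (pad_anti Γ hΓanti) (pad Γ') (pad_sq Γ' hΓ'sq) (pad_anti Γ' hΓ'anti) h,
      fun h => transfer_isUnit hD (Fin.snoc a 0) (pad Γ') (pad_sq Γ' hΓ'sq)
        (pad_anti Γ' hΓ'anti) (pad Γ) (pad_sq Γ hΓsq) (pad_anti Γ hΓanti) h⟩
end

section
/- Let $X, Y, H, H_0$ be Hermitian $n\times n$ matrices with $XY=YX$, let $Z = X+iY$ be invertible, and set $\gamma = \|L_0(X,Y,H)^{-1}\|^{-2}$ and $\gamma_0 = \|L_0(X,Y,H+H_0)^{-1}\|^{-2}$ (assuming both localizers are invertible). Suppose $\| |Z|^{-1}(HH_0 + H_0H + H_0^2)|Z|^{-1}\| \le C$, $\|[Z,H]\| \le D$, and $\||Z|^{-1}[Z,H_0]|Z|^{-1}\| \le E$. Then $|\gamma - \gamma_0| \le (C+E)\gamma + (C+E)D$. -/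
open Matrix
open scoped Matrix.Norms.L2Operator ComplexOrder

set_option linter.unusedSectionVars false
set_option maxHeartbeats 8000000

noncomputable def slgToE {ι : Type*} [Fintype ι] : (ι → ℂ) → EuclideanSpace ℂ ι :=
  fun x => (EuclideanSpace.equiv ι ℂ).symm x

variable {ι : Type*} [Fintype ι] [DecidableEq ι]

lemma slg_coe (x : ι → ℂ) : (slgToE x : ι → ℂ) = x := rfl

lemma slg_normsq (x : ι → ℂ) : ‖slgToE x‖ ^ 2 = Complex.re (star x ⬝ᵥ x) := by
  rw [← inner_self_eq_norm_sq (𝕜 := ℂ) (slgToE x)]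
  have : inner (𝕜 := ℂ) (slgToE x) (slgToE x) = star x ⬝ᵥ x := by
    simp [PiLp.inner_apply, dotProduct, mul_comm, slgToE, -inner_self_eq_norm_sq_to_K]
  rw [this]; rfl

lemma slg_re_dot_le (A : Matrix ι ι ℂ) (x y : ι → ℂ) :
    |Complex.re (star x ⬝ᵥ A *ᵥ y)| ≤ ‖A‖ * ‖slgToE x‖ * ‖slgToE y‖ := by
  have h1 : star x ⬝ᵥ A *ᵥ y = inner (𝕜 := ℂ) (slgToE x) (slgToE (A *ᵥ y)) := by
    simp [PiLp.inner_apply, dotProduct, mul_comm, slgToE]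
  calc |Complex.re (star x ⬝ᵥ A *ᵥ y)| ≤ ‖star x ⬝ᵥ A *ᵥ y‖ := Complex.abs_re_le_norm _
    _ = ‖inner (𝕜 := ℂ) (slgToE x) (slgToE (A *ᵥ y))‖ := by rw [h1]
    _ ≤ ‖slgToE x‖ * ‖slgToE (A *ᵥ y)‖ := norm_inner_le_norm _ _
    _ ≤ ‖slgToE x‖ * (‖A‖ * ‖slgToE y‖) := by
        gcongr; exact Matrix.l2_opNorm_mulVec A (slgToE y)
    _ = ‖A‖ * ‖slgToE x‖ * ‖slgToE y‖ := by ring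

lemma slg_lower {A : Matrix ι ι ℂ} (hA : IsUnit A) (x : ι → ℂ) :
    ‖A⁻¹‖⁻¹ * ‖slgToE x‖ ≤ ‖slgToE (A *ᵥ x)‖ := by
  have hdet : IsUnit A.det := (Matrix.isUnit_iff_isUnit_det A).mp hA
  have h2 : ‖slgToE x‖ ≤ ‖A⁻¹‖ * ‖slgToE (A *ᵥ x)‖ := by
    have h3 := Matrix.l2_opNorm_mulVec A⁻¹ (slgToE (A *ᵥ x))
    have h4 : slgToE (A⁻¹ *ᵥ (A *ᵥ x)) = slgToE x := by
      rw [Matrix.mulVec_mulVec, Matrix.nonsing_inv_mul A hdet, Matrix.one_mulVec]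
    exact h4 ▸ h3
  rcases le_or_gt ‖A⁻¹‖ 0 with h | h
  · have h0 : ‖A⁻¹‖⁻¹ = 0 := by
      rw [inv_eq_zero]; exact le_antisymm h (norm_nonneg _)
    rw [h0, zero_mul]; exact norm_nonneg _
  · rw [inv_mul_le_iff₀ h]; linarith

lemma slg_exists [Nonempty ι] {A : Matrix ι ι ℂ} (hA : IsUnit A) :
    ∃ x : ι → ℂ, ‖slgToE x‖ = 1 ∧ ‖slgToE (A *ᵥ x)‖ = ‖A⁻¹‖⁻¹ := by
  have hdet : IsUnit A.det := (Matrix.isUnit_iff_isUnit_det A).mp hA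
  set B := A⁻¹ with hB
  set T : EuclideanSpace ℂ ι →L[ℂ] EuclideanSpace ℂ ι :=
    (Matrix.toEuclideanLin.trans LinearMap.toContinuousLinearMap) B with hT
  have hTapp : ∀ y : ι → ℂ, T (slgToE y) = slgToE (B *ᵥ y) := fun y => rfl
  have hTnorm : ‖B‖ = ‖T‖ := Matrix.l2_opNorm_def B
  have hcs : IsCompact (Metric.sphere (0 : EuclideanSpace ℂ ι) 1) := isCompact_sphere _ _
  have hne : (Metric.sphere (0 : EuclideanSpace ℂ ι) 1).Nonempty :=
    NormedSpace.sphere_nonempty.mpr zero_le_one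
  obtain ⟨w, hw, hwmax⟩ := hcs.exists_isMaxOn hne ((T.continuous.norm).continuousOn)
  have hw1 : ‖w‖ = 1 := by simpa using hw
  simp only [IsMaxOn, IsMinOn] at hwmax
  have hle : ‖B‖ ≤ ‖T w‖ := by
    rw [hTnorm]
    apply ContinuousLinearMap.opNorm_le_bound _ (norm_nonneg _)
    intro y
    rcases eq_or_ne y 0 with rfl | hy
    · simp
    · have hy' : ‖y‖ ≠ 0 := norm_ne_zero_iff.mpr hy
      set x : EuclideanSpace ℂ ι := ((‖y‖ : ℂ))⁻¹ • y with hx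
      have hxs : x ∈ Metric.sphere (0 : EuclideanSpace ℂ ι) 1 := by
        simp [hx, norm_smul, mem_sphere_iff_norm, inv_mul_cancel₀ hy']
      have hTx : T x = ((‖y‖ : ℂ))⁻¹ • T y := by rw [hx]; exact T.map_smul _ _
      have this2 : ‖T x‖ ≤ ‖T w‖ := hwmax hxs
      rw [hTx] at this2
      simp only [norm_smul] at this2
      have h2 : ‖((‖y‖ : ℂ))⁻¹‖ = ‖y‖⁻¹ := by
        rw [norm_inv, Complex.norm_real, Real.norm_eq_abs, abs_of_nonneg (norm_nonneg _)]
      rw [h2] at this2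
      calc ‖T y‖ = ‖y‖ * (‖y‖⁻¹ * ‖T y‖) := by field_simp
        _ ≤ ‖y‖ * ‖T w‖ := mul_le_mul_of_nonneg_left this2 (norm_nonneg _)
        _ = ‖T w‖ * ‖y‖ := by ring
  have hge : ‖T w‖ ≤ ‖B‖ := by
    rw [hTnorm]
    simpa [hw1] using T.le_opNorm w
  have hTw : ‖T w‖ = ‖B‖ := le_antisymm hge hle
  have hBpos : 0 < ‖B‖ := by
    rcases eq_or_lt_of_le (norm_nonneg B) with h0 | h
    · exfalso
      have hB0 : B = 0 := norm_eq_zero.mp h0.symm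
      have h1 : A⁻¹ * A = 1 := Matrix.nonsing_inv_mul A hdet
      rw [← hB, hB0, zero_mul] at h1
      obtain ⟨i⟩ := (inferInstance : Nonempty ι)
      have h2 : (1 : Matrix ι ι ℂ) i i = 0 := by rw [← h1]; simp
      simp [Matrix.one_apply] at h2
    · exact h
  have hTwpos : 0 < ‖T w‖ := hTw ▸ hBpos
  set u : ι → ℂ := B *ᵥ (w : ι → ℂ) with hu
  have hue : slgToE u = T w := rfl
  have hu' : ‖slgToE u‖ ≠ 0 := by rw [hue]; exact ne_of_gt hTwpos
  refine ⟨((‖slgToE u‖ : ℂ))⁻¹ • u, ?_, ?_⟩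
  · have : slgToE (((‖slgToE u‖ : ℂ))⁻¹ • u) = ((‖slgToE u‖ : ℂ))⁻¹ • slgToE u := rfl
    rw [this, norm_smul]
    have h2 : ‖((‖slgToE u‖ : ℂ))⁻¹‖ = ‖slgToE u‖⁻¹ := by
      rw [norm_inv, Complex.norm_real, Real.norm_eq_abs, abs_of_nonneg (norm_nonneg _)]
    rw [h2, inv_mul_cancel₀ hu']
  · have hAu : A *ᵥ u = (w : ι → ℂ) := by
      rw [hu, Matrix.mulVec_mulVec, Matrix.mul_nonsing_inv A hdet, Matrix.one_mulVec]
    have hAx : A *ᵥ (((‖slgToE u‖ : ℂ))⁻¹ • u) = ((‖slgToE u‖ : ℂ))⁻¹ • (w : ι → ℂ) := by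
      rw [Matrix.mulVec_smul, hAu]
    have he : slgToE (A *ᵥ (((‖slgToE u‖ : ℂ))⁻¹ • u)) = ((‖slgToE u‖ : ℂ))⁻¹ • w := by
      rw [hAx]; rfl
    rw [he, norm_smul, hw1, mul_one]
    have h2 : ‖((‖slgToE u‖ : ℂ))⁻¹‖ = ‖slgToE u‖⁻¹ := by
      rw [norm_inv, Complex.norm_real, Real.norm_eq_abs, abs_of_nonneg (norm_nonneg _)]
    rw [h2, hue, hTw]

lemma slg_normsq_mulVec {M : Matrix ι ι ℂ} (hM : Mᴴ = M) (v : ι → ℂ) :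
    ‖slgToE (M *ᵥ v)‖ ^ 2 = Complex.re (star v ⬝ᵥ (M * M) *ᵥ v) := by
  rw [slg_normsq]
  congr 1
  rw [Matrix.star_mulVec, hM, ← Matrix.dotProduct_mulVec, Matrix.mulVec_mulVec]

lemma slg_weight {R : Matrix ι ι ℂ} (M : Matrix ι ι ℂ) (hRh : Rᴴ = R)
    (h1 : R⁻¹ * R = 1) (h2 : R * R⁻¹ = 1) (v w : ι → ℂ) :
    star v ⬝ᵥ M *ᵥ w = star (R *ᵥ v) ⬝ᵥ (R⁻¹ * M * R⁻¹) *ᵥ (R *ᵥ w) := by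
  rw [Matrix.star_mulVec, hRh, Matrix.mulVec_mulVec]
  conv_rhs => rw [Matrix.dotProduct_mulVec, Matrix.vecMul_vecMul, ← Matrix.dotProduct_mulVec]
  have hmm : R * (R⁻¹ * M * R⁻¹ * R) = M :=
    calc R * (R⁻¹ * M * R⁻¹ * R) = R * (R⁻¹ * (M * (R⁻¹ * R))) := by
          simp only [Matrix.mul_assoc]
      _ = R * (R⁻¹ * M) := by rw [h1, Matrix.mul_one]
      _ = R * R⁻¹ * M := by rw [Matrix.mul_assoc]
      _ = M := by rw [h2, Matrix.one_mul]
  rw [hmm]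

lemma slg_star_sum_elim (x y : ι → ℂ) :
    star (Sum.elim x y) = Sum.elim (star x) (star y) := by
  funext i; cases i <;> rfl

lemma slg_quad_fromBlocks (A B C D : Matrix ι ι ℂ) (x y : ι → ℂ) :
    star (Sum.elim x y) ⬝ᵥ (Matrix.fromBlocks A B C D) *ᵥ (Sum.elim x y) =
      star x ⬝ᵥ A *ᵥ x + star x ⬝ᵥ B *ᵥ y + star y ⬝ᵥ C *ᵥ x + star y ⬝ᵥ D *ᵥ y := by
  rw [Matrix.fromBlocks_mulVec, slg_star_sum_elim, sumElim_dotProduct_sumElim,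
    dotProduct_add, dotProduct_add]
  simp only [Sum.elim_comp_inl, Sum.elim_comp_inr]
  ring

lemma slg_dot_sum_split (x y : ι ⊕ ι → ℂ) :
    star x ⬝ᵥ y = star (x ∘ Sum.inl) ⬝ᵥ (y ∘ Sum.inl) + star (x ∘ Sum.inr) ⬝ᵥ (y ∘ Sum.inr) := by
  simp [dotProduct, Fintype.sum_sum_type]

lemma slg_key {n : ℕ} (H W Bm K R : Matrix (Fin n) (Fin n) ℂ)
    (hHh : Hᴴ = H) (hRh : Rᴴ = R) (hr1 : R⁻¹ * R = 1) (hr2 : R * R⁻¹ = 1)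
    {C D E : ℝ} (hC : ‖R⁻¹ * W * R⁻¹‖ ≤ C) (hD : ‖K‖ ≤ D) (hE : ‖R⁻¹ * Bm * R⁻¹‖ ≤ E)
    (v : Fin n ⊕ Fin n → ℂ) (hv : ‖slgToE v‖ = 1) :
    |Complex.re (star v ⬝ᵥ (Matrix.fromBlocks W Bmᴴ Bm W) *ᵥ v)| ≤
      (C + E) * (Complex.re (star v ⬝ᵥ
        (Matrix.fromBlocks (H*H + R*R) Kᴴ K (R*R + H*H)) *ᵥ v) + D) := by
  have hC0 : 0 ≤ C := le_trans (norm_nonneg _) hC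
  have hD0 : 0 ≤ D := le_trans (norm_nonneg _) hD
  have hE0 : 0 ≤ E := le_trans (norm_nonneg _) hE
  set v₁ : Fin n → ℂ := v ∘ Sum.inl with hv₁
  set v₂ : Fin n → ℂ := v ∘ Sum.inr with hv₂
  have hve : Sum.elim v₁ v₂ = v := Sum.elim_comp_inl_inr v
  have hRi : R⁻¹ᴴ = R⁻¹ := by rw [Matrix.conjTranspose_nonsing_inv, hRh]
  -- unit split
  have hsplit : ‖slgToE v₁‖ ^ 2 + ‖slgToE v₂‖ ^ 2 = 1 := by
    have h := slg_normsq v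
    rw [hv, one_pow, slg_dot_sum_split v v, Complex.add_re] at h
    rw [slg_normsq v₁, slg_normsq v₂]
    exact h.symm
  -- block splits of the two quadratic forms
  have hdq : star v ⬝ᵥ (Matrix.fromBlocks W Bmᴴ Bm W) *ᵥ v
      = star v₁ ⬝ᵥ W *ᵥ v₁ + star v₁ ⬝ᵥ Bmᴴ *ᵥ v₂
        + star v₂ ⬝ᵥ Bm *ᵥ v₁ + star v₂ ⬝ᵥ W *ᵥ v₂ := by
    conv_lhs => rw [← hve]
    exact slg_quad_fromBlocks _ _ _ _ v₁ v₂
  have hlq : star v ⬝ᵥ (Matrix.fromBlocks (H*H + R*R) Kᴴ K (R*R + H*H)) *ᵥ v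
      = (star v₁ ⬝ᵥ (H*H) *ᵥ v₁ + star v₁ ⬝ᵥ (R*R) *ᵥ v₁) + star v₁ ⬝ᵥ Kᴴ *ᵥ v₂
        + star v₂ ⬝ᵥ K *ᵥ v₁ + (star v₂ ⬝ᵥ (R*R) *ᵥ v₂ + star v₂ ⬝ᵥ (H*H) *ᵥ v₂) := by
    conv_lhs => rw [← hve]
    rw [slg_quad_fromBlocks, Matrix.add_mulVec, dotProduct_add, Matrix.add_mulVec, dotProduct_add]
  set a : ℝ := ‖slgToE (R *ᵥ v₁)‖ with ha
  set b : ℝ := ‖slgToE (R *ᵥ v₂)‖ with hb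
  set m₁ : ℝ := ‖slgToE v₁‖ with hm₁
  set m₂ : ℝ := ‖slgToE v₂‖ with hm₂
  have ha0 : 0 ≤ a := norm_nonneg _
  have hb0 : 0 ≤ b := norm_nonneg _
  have hm₁0 : 0 ≤ m₁ := norm_nonneg _
  have hm₂0 : 0 ≤ m₂ := norm_nonneg _
  -- conjTranspose norm facts
  have hBmH : ‖R⁻¹ * Bmᴴ * R⁻¹‖ ≤ E := by
    have h1 : R⁻¹ * Bmᴴ * R⁻¹ = (R⁻¹ * Bm * R⁻¹)ᴴ := by
      simp only [Matrix.conjTranspose_mul, hRi, Matrix.mul_assoc]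
    rw [h1, Matrix.l2_opNorm_conjTranspose]
    exact hE
  have hKH : ‖Kᴴ‖ ≤ D := by rw [Matrix.l2_opNorm_conjTranspose]; exact hD
  -- weighted bounds for the perturbation blocks
  have hw11 : |Complex.re (star v₁ ⬝ᵥ W *ᵥ v₁)| ≤ C * (a * a) := by
    rw [slg_weight W hRh hr1 hr2]
    have h := slg_re_dot_le (R⁻¹ * W * R⁻¹) (R *ᵥ v₁) (R *ᵥ v₁)
    nlinarith
  have hw22 : |Complex.re (star v₂ ⬝ᵥ W *ᵥ v₂)| ≤ C * (b * b) := by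
    rw [slg_weight W hRh hr1 hr2]
    have h := slg_re_dot_le (R⁻¹ * W * R⁻¹) (R *ᵥ v₂) (R *ᵥ v₂)
    nlinarith
  have hw12 : |Complex.re (star v₁ ⬝ᵥ Bmᴴ *ᵥ v₂)| ≤ E * (a * b) := by
    rw [slg_weight Bmᴴ hRh hr1 hr2]
    have h := slg_re_dot_le (R⁻¹ * Bmᴴ * R⁻¹) (R *ᵥ v₁) (R *ᵥ v₂)
    rw [← ha, ← hb] at h
    nlinarith [mul_nonneg ha0 hb0]
  have hw21 : |Complex.re (star v₂ ⬝ᵥ Bm *ᵥ v₁)| ≤ E * (b * a) := by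
    rw [slg_weight Bm hRh hr1 hr2]
    have h := slg_re_dot_le (R⁻¹ * Bm * R⁻¹) (R *ᵥ v₂) (R *ᵥ v₁)
    rw [← ha, ← hb] at h
    nlinarith [mul_nonneg ha0 hb0]
  -- bound the perturbation form by the weighted norms
  have hda : |Complex.re (star v ⬝ᵥ (Matrix.fromBlocks W Bmᴴ Bm W) *ᵥ v)|
      ≤ (C + E) * (a * a + b * b) := by
    rw [hdq]
    simp only [Complex.add_re]
    have t1 := abs_add_le (Complex.re (star v₁ ⬝ᵥ W *ᵥ v₁) + Complex.re (star v₁ ⬝ᵥ Bmᴴ *ᵥ v₂)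
        + Complex.re (star v₂ ⬝ᵥ Bm *ᵥ v₁)) (Complex.re (star v₂ ⬝ᵥ W *ᵥ v₂))
    have t2 := abs_add_le (Complex.re (star v₁ ⬝ᵥ W *ᵥ v₁) + Complex.re (star v₁ ⬝ᵥ Bmᴴ *ᵥ v₂))
        (Complex.re (star v₂ ⬝ᵥ Bm *ᵥ v₁))
    have t3 := abs_add_le (Complex.re (star v₁ ⬝ᵥ W *ᵥ v₁)) (Complex.re (star v₁ ⬝ᵥ Bmᴴ *ᵥ v₂))
    nlinarith [sq_nonneg (a - b)]
  -- weighted square identities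
  have e1 : Complex.re (star v₁ ⬝ᵥ (R*R) *ᵥ v₁) = a * a := by
    rw [← slg_normsq_mulVec hRh, ha, pow_two]
  have e2 : Complex.re (star v₂ ⬝ᵥ (R*R) *ᵥ v₂) = b * b := by
    rw [← slg_normsq_mulVec hRh, hb, pow_two]
  have e3 : 0 ≤ Complex.re (star v₁ ⬝ᵥ (H*H) *ᵥ v₁) := by
    rw [← slg_normsq_mulVec hHh]; positivity
  have e4 : 0 ≤ Complex.re (star v₂ ⬝ᵥ (H*H) *ᵥ v₂) := by
    rw [← slg_normsq_mulVec hHh]; positivity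
  have c1 : |Complex.re (star v₁ ⬝ᵥ Kᴴ *ᵥ v₂)| ≤ D * (m₁ * m₂) := by
    have h := slg_re_dot_le Kᴴ v₁ v₂
    rw [← hm₁, ← hm₂] at h
    nlinarith [mul_nonneg hm₁0 hm₂0]
  have c2 : |Complex.re (star v₂ ⬝ᵥ K *ᵥ v₁)| ≤ D * (m₂ * m₁) := by
    have h := slg_re_dot_le K v₂ v₁
    rw [← hm₁, ← hm₂] at h
    nlinarith [mul_nonneg hm₁0 hm₂0]
  -- s ≤ t + D
  have hs : a * a + b * b
      ≤ Complex.re (star v ⬝ᵥ (Matrix.fromBlocks (H*H + R*R) Kᴴ K (R*R + H*H)) *ᵥ v) + D := by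
    rw [hlq]
    simp only [Complex.add_re]
    rw [e1, e2]
    have hc1 := abs_le.mp c1
    have hc2 := abs_le.mp c2
    nlinarith [sq_nonneg (m₁ - m₂)]
  calc |Complex.re (star v ⬝ᵥ (Matrix.fromBlocks W Bmᴴ Bm W) *ᵥ v)|
      ≤ (C + E) * (a * a + b * b) := hda
    _ ≤ (C + E) * (Complex.re (star v ⬝ᵥ
        (Matrix.fromBlocks (H*H + R*R) Kᴴ K (R*R + H*H)) *ᵥ v) + D) := by
        apply mul_le_mul_of_nonneg_left hs (by linarith)

/-- stability of the squared localizer gap under a perturbation `H₀` of the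
Hamiltonian. Here `R` is the positive semidefinite absolute value `|Z| = (ZᴴZ)^{1/2}` of
`Z = X + iY`, and `γ = ‖L₀(X,Y,H)⁻¹‖⁻²`, `γ₀ = ‖L₀(X,Y,H+H₀)⁻¹‖⁻²`. -/
theorem localizer_gap_perturbation {n : ℕ}
    (X Y H H₀ : Matrix (Fin n) (Fin n) ℂ)
    (hX : X.IsHermitian) (hY : Y.IsHermitian) (hH : H.IsHermitian) (hH₀ : H₀.IsHermitian)
    (hcomm : X * Y = Y * X)
    (Z : Matrix (Fin n) (Fin n) ℂ) (hZdef : Z = X + Complex.I • Y) (hZunit : IsUnit Z)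
    (R : Matrix (Fin n) (Fin n) ℂ) (hR : R.PosSemidef) (hRsq : R * R = Zᴴ * Z)
    (hL : IsUnit (Matrix.fromBlocks H Zᴴ Z (-H)))
    (hL₀ : IsUnit (Matrix.fromBlocks (H + H₀) Zᴴ Z (-(H + H₀))))
    (C D E : ℝ)
    (hC : ‖R⁻¹ * (H * H₀ + H₀ * H + H₀ * H₀) * R⁻¹‖ ≤ C)
    (hD : ‖Z * H - H * Z‖ ≤ D)
    (hE : ‖R⁻¹ * (Z * H₀ - H₀ * Z) * R⁻¹‖ ≤ E) :
    |‖(Matrix.fromBlocks H Zᴴ Z (-H))⁻¹‖⁻¹ ^ 2 -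
      ‖(Matrix.fromBlocks (H + H₀) Zᴴ Z (-(H + H₀)))⁻¹‖⁻¹ ^ 2| ≤
      (C + E) * ‖(Matrix.fromBlocks H Zᴴ Z (-H))⁻¹‖⁻¹ ^ 2 + (C + E) * D := by
  have hC0 : 0 ≤ C := le_trans (norm_nonneg _) hC
  have hD0 : 0 ≤ D := le_trans (norm_nonneg _) hD
  have hE0 : 0 ≤ E := le_trans (norm_nonneg _) hE
  rcases Nat.eq_zero_or_pos n with hn | hn
  · -- trivial case n = 0
    subst hn
    have h1 : (Matrix.fromBlocks H Zᴴ Z (-H))⁻¹ = 0 := by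
      ext i j; exact isEmptyElim i
    have h2 : (Matrix.fromBlocks (H + H₀) Zᴴ Z (-(H + H₀)))⁻¹ = 0 := by
      ext i j; exact isEmptyElim i
    rw [h1, h2, norm_zero]
    norm_num
    positivity
  -- main case
  have hne : Nonempty (Fin n ⊕ Fin n) := ⟨Sum.inl ⟨0, hn⟩⟩
  -- basic algebraic facts
  have hZc : Zᴴ = X - Complex.I • Y := by
    rw [hZdef, Matrix.conjTranspose_add, Matrix.conjTranspose_smul, hX.eq, hY.eq]
    rw [Complex.star_def, Complex.conj_I, neg_smul, sub_eq_add_neg]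
  have hZZ' : Z * Zᴴ = Zᴴ * Z := by
    rw [hZc, hZdef]
    simp only [mul_sub, sub_mul, mul_add, add_mul, Matrix.mul_smul, Matrix.smul_mul, smul_smul]
    rw [hcomm]
    abel
  have hRdet : IsUnit R.det := by
    have hz : IsUnit Z.det := (Matrix.isUnit_iff_isUnit_det Z).mp hZunit
    have h1 : IsUnit (Zᴴ * Z).det := by
      rw [Matrix.det_mul, Matrix.det_conjTranspose]; exact (hz.star).mul hz
    rw [← hRsq, Matrix.det_mul] at h1
    exact isUnit_of_mul_isUnit_left h1
  have hRh : Rᴴ = R := hR.1.eq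
  have hr1 : R⁻¹ * R = 1 := Matrix.nonsing_inv_mul R hRdet
  have hr2 : R * R⁻¹ = 1 := Matrix.mul_nonsing_inv R hRdet
  -- the two localizers and their squares
  set L : Matrix (Fin n ⊕ Fin n) (Fin n ⊕ Fin n) ℂ := Matrix.fromBlocks H Zᴴ Z (-H) with hLdef
  set L' : Matrix (Fin n ⊕ Fin n) (Fin n ⊕ Fin n) ℂ :=
    Matrix.fromBlocks (H + H₀) Zᴴ Z (-(H + H₀)) with hL'def
  have hLh : Lᴴ = L := by
    rw [hLdef]
    simp [Matrix.fromBlocks_conjTranspose, hH.eq, Matrix.conjTranspose_neg]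
  have hL'h : L'ᴴ = L' := by
    rw [hL'def]
    simp [Matrix.fromBlocks_conjTranspose, Matrix.conjTranspose_add, hH.eq, hH₀.eq,
      Matrix.conjTranspose_neg]
  set K : Matrix (Fin n) (Fin n) ℂ := Z * H - H * Z with hK
  set Bm : Matrix (Fin n) (Fin n) ℂ := Z * H₀ - H₀ * Z with hBm
  set W : Matrix (Fin n) (Fin n) ℂ := H * H₀ + H₀ * H + H₀ * H₀ with hW
  have hLsq : L * L = Matrix.fromBlocks (H*H + R*R) Kᴴ K (R*R + H*H) := by
    rw [hLdef, Matrix.fromBlocks_multiply, Matrix.fromBlocks_inj]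
    refine ⟨?_, ?_, ?_, ?_⟩
    · rw [hRsq]
    · rw [hK, Matrix.conjTranspose_sub, Matrix.conjTranspose_mul, Matrix.conjTranspose_mul,
        hH.eq]
      noncomm_ring
    · rw [hK]; noncomm_ring
    · rw [hRsq, ← hZZ']; noncomm_ring
  have hL'sq : L' * L' = Matrix.fromBlocks ((H+H₀)*(H+H₀) + R*R) (K + Bm)ᴴ (K + Bm)
      (R*R + (H+H₀)*(H+H₀)) := by
    rw [hL'def, Matrix.fromBlocks_multiply, Matrix.fromBlocks_inj]
    refine ⟨?_, ?_, ?_, ?_⟩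
    · rw [hRsq]
    · rw [hK, hBm, Matrix.conjTranspose_add, Matrix.conjTranspose_sub, Matrix.conjTranspose_sub,
        Matrix.conjTranspose_mul, Matrix.conjTranspose_mul, Matrix.conjTranspose_mul,
        Matrix.conjTranspose_mul, hH.eq, hH₀.eq]
      noncomm_ring
    · rw [hK, hBm]; noncomm_ring
    · rw [hRsq, ← hZZ']; noncomm_ring
  have hDelta : L' * L' = L * L + Matrix.fromBlocks W Bmᴴ Bm W := by
    rw [hLsq, hL'sq, Matrix.fromBlocks_add, Matrix.fromBlocks_inj]
    refine ⟨?_, ?_, ?_, ?_⟩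
    · rw [hW]; noncomm_ring
    · rw [Matrix.conjTranspose_add]
    · rfl
    · rw [hW]; noncomm_ring
  -- quadratic-form facts
  have hquadL : ∀ v : Fin n ⊕ Fin n → ℂ,
      ‖slgToE (L *ᵥ v)‖ ^ 2 = Complex.re (star v ⬝ᵥ (L * L) *ᵥ v) :=
    fun v => slg_normsq_mulVec hLh v
  have hquadL' : ∀ v : Fin n ⊕ Fin n → ℂ,
      ‖slgToE (L' *ᵥ v)‖ ^ 2 = Complex.re (star v ⬝ᵥ (L' * L') *ᵥ v) :=
    fun v => slg_normsq_mulVec hL'h v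
  have hsplitQ : ∀ v : Fin n ⊕ Fin n → ℂ,
      Complex.re (star v ⬝ᵥ (L' * L') *ᵥ v) = Complex.re (star v ⬝ᵥ (L * L) *ᵥ v)
        + Complex.re (star v ⬝ᵥ (Matrix.fromBlocks W Bmᴴ Bm W) *ᵥ v) := by
    intro v
    rw [hDelta, Matrix.add_mulVec, dotProduct_add, Complex.add_re]
  have hkey : ∀ v : Fin n ⊕ Fin n → ℂ, ‖slgToE v‖ = 1 →
      |Complex.re (star v ⬝ᵥ (Matrix.fromBlocks W Bmᴴ Bm W) *ᵥ v)| ≤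
        (C + E) * (Complex.re (star v ⬝ᵥ (L * L) *ᵥ v) + D) := by
    intro v hv
    rw [hLsq]
    exact slg_key H W Bm K R hH.eq hRh hr1 hr2 hC hD hE v hv
  -- names for the two gaps
  set g : ℝ := ‖L⁻¹‖⁻¹ ^ 2 with hg
  set g' : ℝ := ‖L'⁻¹‖⁻¹ ^ 2 with hg'
  have hg0 : 0 ≤ g := by rw [hg]; exact sq_nonneg _
  have hg'0 : 0 ≤ g' := by rw [hg']; exact sq_nonneg _
  -- Step 1 : g' ≤ g + (C+E)*(g+D)
  obtain ⟨v, hv1, hvL⟩ := slg_exists (ι := Fin n ⊕ Fin n) hL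
  have ht : Complex.re (star v ⬝ᵥ (L * L) *ᵥ v) = g := by
    rw [← hquadL v, hvL, hg]
  have hstep1 : g' ≤ g + (C + E) * (g + D) := by
    have h1 : ‖L'⁻¹‖⁻¹ ≤ ‖slgToE (L' *ᵥ v)‖ := by
      have := slg_lower hL₀ v
      rw [hv1, mul_one] at this
      exact this
    have h2 : g' ≤ ‖slgToE (L' *ᵥ v)‖ ^ 2 := by
      rw [hg']
      have h0 : 0 ≤ ‖L'⁻¹‖⁻¹ := inv_nonneg.mpr (norm_nonneg _)
      exact pow_le_pow_left₀ h0 h1 2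
    rw [hquadL' v, hsplitQ v, ht] at h2
    have h3 := hkey v hv1
    rw [ht] at h3
    have h4 := (abs_le.mp h3).2
    linarith
  -- Step 2 : g - g' ≤ (C+E)*g + (C+E)*D
  obtain ⟨u, hu1, huL'⟩ := slg_exists (ι := Fin n ⊕ Fin n) hL₀
  have ht' : Complex.re (star u ⬝ᵥ (L' * L') *ᵥ u) = g' := by
    rw [← hquadL' u, huL', hg']
  have htge : g ≤ Complex.re (star u ⬝ᵥ (L * L) *ᵥ u) := by
    rw [← hquadL u, hg]
    have h1 : ‖L⁻¹‖⁻¹ ≤ ‖slgToE (L *ᵥ u)‖ := by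
      have := slg_lower hL u
      rw [hu1, mul_one] at this
      exact this
    have h0 : 0 ≤ ‖L⁻¹‖⁻¹ := inv_nonneg.mpr (norm_nonneg _)
    exact pow_le_pow_left₀ h0 h1 2
  have hstep2 : g - g' ≤ (C + E) * g + (C + E) * D := by
    set t : ℝ := Complex.re (star u ⬝ᵥ (L * L) *ᵥ u) with htdef
    have h3 := hkey u hu1
    rw [← htdef] at h3
    have h4 := (abs_le.mp h3).1
    have h5 : g' = t + Complex.re (star u ⬝ᵥ (Matrix.fromBlocks W Bmᴴ Bm W) *ᵥ u) := by
      rw [← ht', hsplitQ u, htdef]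
    rcases le_or_gt (C + E) 1 with hce | hce
    · nlinarith
    · nlinarith
  have hfinal := abs_sub_le_iff.mpr ⟨hstep2, by linarith⟩
  exact hfinal
end

section
/- Let $P$ be an orthogonal projection ($P^2 = P = P^\dagger$) on $\mathbb{C}^n$ of rank $m$, let $U, V$ be $n\times n$ matrices, and let $W$ be an $n\times m$ matrix whose columns form an orthonormal basis of the range of $P$ (so $W^\dagger W = I_m$ and $WW^\dagger = P$). Set $U_1 = W^\dagger U W$, $V_1 = W^\dagger V W$, $A = PUP + (I-P)$, and $B = PVP + (I-P)$. Then the spectrum of $BAB^\dagger A^\dagger$ equals the spectrum of $V_1 U_1 V_1^\dagger U_1^\dagger$ together with the eigenvalue $1$ with multiplicity at least $n - m$ (when $m < n$); in particular, if no eigenvalue of either product lies on $(-\infty, 0]$, then $\operatorname{Tr}(\log(B A B^\dagger A^\dagger)) = \operatorname{Tr}(\log(V_1 U_1 V_1^\dagger U_1^\dagger))$. -/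
open Matrix Polynomial

section Helpers

variable {n m : ℕ}

private lemma eval_charpoly' {R : Type*} [CommRing R] {k : Type*} [Fintype k] [DecidableEq k]
    (M : Matrix k k R) (x : R) : (M.charpoly).eval x = (x • (1 : Matrix k k R) - M).det := by
  rw [Matrix.charpoly, _root_.eval_det, Matrix.matPolyEquiv_charmatrix]
  rw [eval_sub, eval_X, eval_C]
  congr 1
  rw [Matrix.scalar_apply, Matrix.smul_one_eq_diagonal]

private lemma compress_mul (W : Matrix (Fin n) (Fin m) ℂ) (hW : Wᴴ * W = 1)
    (X Y : Matrix (Fin m) (Fin m) ℂ) :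
    (W * X * Wᴴ + (1 - W * Wᴴ)) * (W * Y * Wᴴ + (1 - W * Wᴴ)) =
      W * (X * Y) * Wᴴ + (1 - W * Wᴴ) := by
  have h1 : Wᴴ * (1 - W * Wᴴ) = 0 := by
    rw [Matrix.mul_sub, Matrix.mul_one, ← Matrix.mul_assoc, hW, Matrix.one_mul, sub_self]
  have h2 : (1 - W * Wᴴ) * W = 0 := by
    rw [Matrix.sub_mul, Matrix.one_mul, Matrix.mul_assoc, hW, Matrix.mul_one, sub_self]
  have h3 : (1 - W * Wᴴ) * (1 - W * Wᴴ) = 1 - W * Wᴴ := by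
    have h2' : (1 - W * Wᴴ) * (W * Wᴴ) = 0 := by
      rw [← Matrix.mul_assoc, h2, Matrix.zero_mul]
    rw [Matrix.mul_sub, Matrix.mul_one, h2', sub_zero]
  rw [Matrix.add_mul, Matrix.mul_add, Matrix.mul_add, h3]
  have h4 : W * X * Wᴴ * (1 - W * Wᴴ) = 0 := by
    rw [Matrix.mul_assoc, Matrix.mul_assoc, h1, Matrix.mul_zero, Matrix.mul_zero]
  have h5 : (1 - W * Wᴴ) * (W * Y * Wᴴ) = 0 := by
    rw [← Matrix.mul_assoc, ← Matrix.mul_assoc, h2, Matrix.zero_mul, Matrix.zero_mul]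
  have h6 : W * X * Wᴴ * (W * Y * Wᴴ) = W * (X * Y) * Wᴴ := by
    simp only [Matrix.mul_assoc]
    rw [← Matrix.mul_assoc Wᴴ W (Y * Wᴴ), hW, Matrix.one_mul]
  rw [h4, h5, h6, add_zero, zero_add]

private lemma charpoly_compress (hmn : m ≤ n) (W : Matrix (Fin n) (Fin m) ℂ) (hW : Wᴴ * W = 1)
    (C : Matrix (Fin m) (Fin m) ℂ) :
    (W * C * Wᴴ + (1 - W * Wᴴ)).charpoly = C.charpoly * (X - 1) ^ (n - m) := by
  have key : ∀ x : ℂ, x ≠ 1 →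
      ((W * C * Wᴴ + (1 - W * Wᴴ)).charpoly).eval x
        = (C.charpoly * (X - 1) ^ (n - m)).eval x := by
    intro x hx
    have hl : x - 1 ≠ 0 := sub_ne_zero.mpr hx
    rw [eval_charpoly', eval_mul, eval_charpoly', eval_pow, eval_sub, eval_X, eval_one]
    set l : ℂ := x - 1 with hldef
    set D : Matrix (Fin m) (Fin m) ℂ := 1 - C with hD
    have hbig : x • (1 : Matrix (Fin n) (Fin n) ℂ) - (W * C * Wᴴ + (1 - W * Wᴴ))
        = l • (1 : Matrix (Fin n) (Fin n) ℂ) + W * D * Wᴴ := by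
      rw [hldef, hD, sub_smul, one_smul, Matrix.mul_sub, Matrix.mul_one, Matrix.sub_mul]
      abel
    have hsmall : x • (1 : Matrix (Fin m) (Fin m) ℂ) - C
        = l • (1 : Matrix (Fin m) (Fin m) ℂ) + D := by
      rw [hldef, hD, sub_smul, one_smul]; abel
    have hWD : W * (l⁻¹ • D) * Wᴴ = l⁻¹ • (W * D * Wᴴ) := by
      rw [Matrix.mul_smul, Matrix.smul_mul]
    have hbig2 : l • (1 : Matrix (Fin n) (Fin n) ℂ) + W * D * Wᴴ
        = l • ((1 : Matrix (Fin n) (Fin n) ℂ) + W * (l⁻¹ • D) * Wᴴ) := by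
      rw [smul_add, hWD, smul_smul, mul_inv_cancel₀ hl, one_smul]
    have hsmall2 : l • (1 : Matrix (Fin m) (Fin m) ℂ) + D
        = l • ((1 : Matrix (Fin m) (Fin m) ℂ) + l⁻¹ • D) := by
      rw [smul_add, smul_smul, mul_inv_cancel₀ hl, one_smul]
    have hdet1 : ((1 : Matrix (Fin n) (Fin n) ℂ) + W * (l⁻¹ • D) * Wᴴ).det
        = ((1 : Matrix (Fin m) (Fin m) ℂ) + l⁻¹ • D).det := by
      rw [Matrix.mul_assoc, Matrix.det_one_add_mul_comm W (l⁻¹ • D * Wᴴ),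
        Matrix.mul_assoc, hW, Matrix.mul_one]
    rw [hbig, hbig2, hsmall, hsmall2, Matrix.det_smul, Matrix.det_smul, hdet1]
    simp only [Fintype.card_fin]
    have hpow : l ^ n = l ^ (n - m) * l ^ m := by
      rw [← pow_add, Nat.sub_add_cancel hmn]
    rw [hpow]; ring
  have hinf : {x : ℂ | ((W * C * Wᴴ + (1 - W * Wᴴ)).charpoly
      - C.charpoly * (X - 1) ^ (n - m)).IsRoot x}.Infinite := by
    apply Set.Infinite.mono (s := {(1 : ℂ)}ᶜ)
    · intro x hx
      simp only [Set.mem_setOf_eq, IsRoot, eval_sub, sub_eq_zero]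
      exact key x hx
    · exact Set.Infinite.mono (fun x hx => hx) ((Set.finite_singleton 1).infinite_compl)
  have h := Polynomial.eq_zero_of_infinite_isRoot _ hinf
  exact sub_eq_zero.mp h

private lemma roots_compress (hmn : m ≤ n) (W : Matrix (Fin n) (Fin m) ℂ) (hW : Wᴴ * W = 1)
    (C : Matrix (Fin m) (Fin m) ℂ) :
    (W * C * Wᴴ + (1 - W * Wᴴ)).charpoly.roots
      = C.charpoly.roots + Multiset.replicate (n - m) 1 := by
  have hX : (X - 1 : ℂ[X]) = X - Polynomial.C 1 := by rw [_root_.map_one]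
  have hne : C.charpoly * (X - 1) ^ (n - m) ≠ 0 := by
    rw [hX]
    exact mul_ne_zero (Matrix.charpoly_monic C).ne_zero
      (pow_ne_zero _ (Polynomial.X_sub_C_ne_zero 1))
  rw [charpoly_compress hmn W hW C, Polynomial.roots_mul hne, hX, Polynomial.roots_pow,
    Polynomial.roots_X_sub_C, Multiset.nsmul_singleton]

end Helpers

section Analysis

variable {k : ℕ}

private lemma exp_sub_one_factor (N : Matrix (Fin k) (Fin k) ℂ) :
    ∃ S : Matrix (Fin k) (Fin k) ℂ,
      NormedSpace.exp N - 1 = N * S ∧ N * S = S * N := by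
  letI : SeminormedRing (Matrix (Fin k) (Fin k) ℂ) := Matrix.linftyOpSemiNormedRing
  letI : NormedRing (Matrix (Fin k) (Fin k) ℂ) := Matrix.linftyOpNormedRing
  letI : NormedAlgebra ℂ (Matrix (Fin k) (Fin k) ℂ) := Matrix.linftyOpNormedAlgebra
  have hsum : Summable fun j : ℕ => ((Nat.factorial j : ℂ))⁻¹ • N ^ j :=
    NormedSpace.expSeries_summable' (𝕂 := ℂ) N
  have hg : Summable fun j : ℕ => ((Nat.factorial (j + 1) : ℂ))⁻¹ • N ^ j := by
    apply Summable.of_norm_bounded (NormedSpace.norm_expSeries_summable' (𝕂 := ℂ) N)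
    intro j
    rw [norm_smul, norm_smul]
    gcongr
    rw [norm_inv, norm_inv]
    gcongr <;> simp only [Complex.norm_natCast, Nat.cast_pos, Nat.cast_le]
    · exact Nat.factorial_pos _
    · exact Nat.factorial_le (Nat.le_succ j)
  have h1 : N * ∑' j : ℕ, ((Nat.factorial (j + 1) : ℂ))⁻¹ • N ^ j
      = ∑' j : ℕ, ((Nat.factorial (j + 1) : ℂ))⁻¹ • N ^ (j + 1) := by
    rw [← hg.tsum_mul_left N]
    congr 1; funext j
    rw [Matrix.mul_smul, ← pow_succ']
  have h2 : (∑' j : ℕ, ((Nat.factorial (j + 1) : ℂ))⁻¹ • N ^ j) * N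
      = ∑' j : ℕ, ((Nat.factorial (j + 1) : ℂ))⁻¹ • N ^ (j + 1) := by
    rw [← hg.tsum_mul_right N]
    congr 1; funext j
    rw [Matrix.smul_mul, ← pow_succ]
  have hexp : NormedSpace.exp N = ∑' j : ℕ, ((Nat.factorial j : ℂ))⁻¹ • N ^ j := by
    simp_rw [NormedSpace.exp_eq_tsum ℂ]
  refine ⟨∑' j : ℕ, ((Nat.factorial (j + 1) : ℂ))⁻¹ • N ^ j, ?_, h1.trans h2.symm⟩
  rw [hexp, h1, Summable.tsum_eq_zero_add hsum]
  simp only [Nat.factorial_zero, Nat.cast_one, inv_one, pow_zero, one_smul]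
  abel

private lemma exp_sub_smul_factor (L : Matrix (Fin k) (Fin k) ℂ) (μ : ℂ) :
    ∃ T : Matrix (Fin k) (Fin k) ℂ,
      NormedSpace.exp L - Complex.exp μ • 1 = (L - μ • 1) * T ∧
        (L - μ • 1) * T = T * (L - μ • 1) := by
  letI : SeminormedRing (Matrix (Fin k) (Fin k) ℂ) := Matrix.linftyOpSemiNormedRing
  letI : NormedRing (Matrix (Fin k) (Fin k) ℂ) := Matrix.linftyOpNormedRing
  letI : NormedAlgebra ℂ (Matrix (Fin k) (Fin k) ℂ) := Matrix.linftyOpNormedAlgebra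
  set N : Matrix (Fin k) (Fin k) ℂ := L - μ • 1 with hN
  obtain ⟨S, hS1, hS2⟩ := exp_sub_one_factor N
  have hsplit : L = μ • (1 : Matrix (Fin k) (Fin k) ℂ) + N := by rw [hN]; abel
  have hcomm : Commute (μ • (1 : Matrix (Fin k) (Fin k) ℂ)) N :=
    (Commute.one_left N).smul_left μ
  have hexpL : NormedSpace.exp L
      = NormedSpace.exp (μ • (1 : Matrix (Fin k) (Fin k) ℂ)) * NormedSpace.exp N := by
    rw [hsplit, Matrix.exp_add_of_commute _ _ hcomm]
  have hsc : NormedSpace.exp (μ • (1 : Matrix (Fin k) (Fin k) ℂ)) = Complex.exp μ • 1 := by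
    have h := NormedSpace.algebraMap_exp_comm (𝕂 := ℂ) (𝔸 := Matrix (Fin k) (Fin k) ℂ) μ
    rw [Algebra.algebraMap_eq_smul_one, Algebra.algebraMap_eq_smul_one, ← Complex.exp_eq_exp_ℂ] at h
    exact h.symm
  refine ⟨Complex.exp μ • S, ?_, ?_⟩
  · rw [hexpL, hsc, Matrix.smul_mul, Matrix.one_mul, Matrix.mul_smul, ← smul_sub, hS1]
  · rw [Matrix.mul_smul, Matrix.smul_mul, hS2]

private lemma charpoly_toLin' (A : Matrix (Fin k) (Fin k) ℂ) :
    (Matrix.toLin' A).charpoly = A.charpoly := by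
  have h := LinearMap.charpoly_toMatrix (Matrix.toLin' A) (Pi.basisFun ℂ (Fin k))
  rw [LinearMap.toMatrix_eq_toMatrix', LinearMap.toMatrix'_toLin'] at h
  exact h.symm

private lemma charpoly_shift (A : Matrix (Fin k) (Fin k) ℂ) (μ : ℂ) :
    (A - μ • 1).charpoly = A.charpoly.comp (X + C μ) := by
  apply Polynomial.funext
  intro x
  rw [eval_charpoly', eval_comp, eval_add, eval_X, eval_C, eval_charpoly']
  congr 1
  rw [add_smul]
  abel

private lemma toLin'_sub_smul (A : Matrix (Fin k) (Fin k) ℂ) (μ : ℂ) :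
    Matrix.toLin' A - μ • 1 = Matrix.toLin' (A - μ • 1) := by
  rw [map_sub, _root_.map_smul, Matrix.toLin'_one]
  rfl

private lemma toLin'_pow (A : Matrix (Fin k) (Fin k) ℂ) (j : ℕ) :
    (Matrix.toLin' A) ^ j = Matrix.toLin' (A ^ j) := by
  induction j with
  | zero => simp [Matrix.toLin'_one]; rfl
  | succ j ih => rw [pow_succ, pow_succ, ih, Matrix.toLin'_mul]; rfl

private lemma finrank_maxGenEig_eq_rootMult (A : Matrix (Fin k) (Fin k) ℂ) (μ : ℂ) :
    Module.finrank ℂ (Module.End.maxGenEigenspace (Matrix.toLin' A) μ) =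
      A.charpoly.rootMultiplicity μ := by
  have hshift : Module.End.maxGenEigenspace (Matrix.toLin' A) μ
      = Module.End.maxGenEigenspace (Matrix.toLin' (A - μ • 1)) 0 := by
    ext x
    rw [Module.End.mem_maxGenEigenspace, Module.End.mem_maxGenEigenspace]
    simp only [zero_smul, sub_zero, toLin'_sub_smul]
  rw [hshift, LinearMap.finrank_maxGenEigenspace_zero_eq, charpoly_toLin', charpoly_shift,
    rootMultiplicity_eq_natTrailingDegree]

private lemma mem_spectrum_of_root (A : Matrix (Fin k) (Fin k) ℂ) {μ : ℂ}
    (h : μ ∈ A.charpoly.roots) : μ ∈ spectrum ℂ A := by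
  rw [spectrum.mem_iff]
  have hroot : A.charpoly.eval μ = 0 := (Polynomial.mem_roots'.mp h).2
  rw [eval_charpoly'] at hroot
  intro hu
  rw [Algebra.algebraMap_eq_smul_one, Matrix.isUnit_iff_isUnit_det, hroot] at hu
  simp at hu

private lemma strip_inj {x y : ℂ} (hx : -Real.pi < x.im ∧ x.im < Real.pi)
    (hy : -Real.pi < y.im ∧ y.im < Real.pi) (h : Complex.exp x = Complex.exp y) : x = y := by
  obtain ⟨j, hj⟩ := Complex.exp_eq_exp_iff_exists_int.mp h
  have him : x.im = y.im + (j : ℝ) * (2 * Real.pi) := by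
    rw [hj]
    simp [Complex.add_im, Complex.mul_im]
  have hpi := Real.pi_pos
  have hj0 : j = 0 := by
    have h1 : -1 < (j : ℝ) := by nlinarith [hx.1, hx.2, hy.1, hy.2]
    have h2 : (j : ℝ) < 1 := by nlinarith [hx.1, hx.2, hy.1, hy.2]
    have h1' : (-1 : ℤ) < j := by exact_mod_cast h1
    have h2' : j < 1 := by exact_mod_cast h2
    omega
  rw [hj, hj0]
  simp

private lemma maxGenEig_le_exp (L : Matrix (Fin k) (Fin k) ℂ) (μ : ℂ) :
    Module.End.maxGenEigenspace (Matrix.toLin' L) μ ≤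
      Module.End.maxGenEigenspace (Matrix.toLin' (NormedSpace.exp L)) (Complex.exp μ) := by
  obtain ⟨T, hT1, hT2⟩ := exp_sub_smul_factor L μ
  intro x hx
  rw [Module.End.mem_maxGenEigenspace] at hx ⊢
  obtain ⟨j, hj⟩ := hx
  refine ⟨j, ?_⟩
  rw [toLin'_sub_smul, _root_.toLin'_pow] at hj ⊢
  have hfac : (NormedSpace.exp L - Complex.exp μ • 1) ^ j = T ^ j * (L - μ • 1) ^ j := by
    rw [hT1, hT2]
    exact Commute.mul_pow hT2.symm j
  rw [hfac, Matrix.toLin'_mul, LinearMap.comp_apply, hj, map_zero]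

private lemma roots_charpoly_exp (L : Matrix (Fin k) (Fin k) ℂ)
    (hstrip : ∀ μ ∈ spectrum ℂ L, -Real.pi < μ.im ∧ μ.im < Real.pi) :
    (NormedSpace.exp L).charpoly.roots = L.charpoly.roots.map Complex.exp := by
  classical
  have hstrip' : ∀ μ ∈ L.charpoly.roots, -Real.pi < μ.im ∧ μ.im < Real.pi :=
    fun μ hμ => hstrip μ (mem_spectrum_of_root L hμ)
  have hcount : ∀ ν : ℂ, (L.charpoly.roots.map Complex.exp).count ν
      ≤ ((NormedSpace.exp L).charpoly.roots).count ν := by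
    intro ν
    by_cases hν : ν ∈ L.charpoly.roots.map Complex.exp
    · obtain ⟨μ, hμ, rfl⟩ := Multiset.mem_map.mp hν
      rw [Multiset.count_map_eq_count Complex.exp _
        (fun a ha b hb hab => strip_inj (hstrip' a ha) (hstrip' b hb) hab) μ hμ]
      rw [Polynomial.count_roots, Polynomial.count_roots,
        ← finrank_maxGenEig_eq_rootMult, ← finrank_maxGenEig_eq_rootMult]
      exact Submodule.finrank_mono (maxGenEig_le_exp L μ)
    · rw [Multiset.count_eq_zero_of_notMem hν]
      exact Nat.zero_le _
  have hcard : ((NormedSpace.exp L).charpoly.roots).card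
      ≤ (L.charpoly.roots.map Complex.exp).card := by
    rw [Multiset.card_map,
      Polynomial.splits_iff_card_roots.mp (IsAlgClosed.splits _),
      Polynomial.splits_iff_card_roots.mp (IsAlgClosed.splits _),
      Matrix.charpoly_natDegree_eq_dim, Matrix.charpoly_natDegree_eq_dim]
  exact (Multiset.eq_of_le_of_card_le (Multiset.le_iff_count.mpr hcount) hcard).symm

end Analysis

private lemma sum_log_exp_roots (L : Matrix (Fin k) (Fin k) ℂ)
    (hstrip : ∀ μ ∈ spectrum ℂ L, -Real.pi < μ.im ∧ μ.im < Real.pi) :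
    ((L.charpoly.roots.map Complex.exp).map Complex.log).sum = L.trace := by
  rw [Multiset.map_map]
  have h : Multiset.map (Complex.log ∘ Complex.exp) L.charpoly.roots
      = Multiset.map id L.charpoly.roots := by
    refine Multiset.map_congr rfl fun μ hμ => ?_
    have hs := hstrip μ (mem_spectrum_of_root L hμ)
    exact Complex.log_exp hs.1 (le_of_lt hs.2)
  rw [h, Multiset.map_id, Matrix.trace_eq_sum_roots_charpoly]

/-- with `P = WWᴴ` an orthogonal projection of rank `m`, `U₁ = WᴴUW`,
`V₁ = WᴴVW`, `A = PUP + (1-P)`, `B = PVP + (1-P)`, the eigenvalues (with multiplicity)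
of `BABᴴAᴴ` are those of `V₁U₁V₁ᴴU₁ᴴ` together with `1` with multiplicity `n - m`;
consequently the traces of the principal logarithms agree whenever neither product has
spectrum on `(-∞, 0]`. -/
theorem bott_index_compression {n m : ℕ} (hmn : m ≤ n)
    (U V : Matrix (Fin n) (Fin n) ℂ) (W : Matrix (Fin n) (Fin m) ℂ)
    (hW : Wᴴ * W = 1)
    (P : Matrix (Fin n) (Fin n) ℂ) (hP : P = W * Wᴴ) :
    ((((P * V * P + (1 - P)) * (P * U * P + (1 - P)) * (P * V * P + (1 - P))ᴴ *
        (P * U * P + (1 - P))ᴴ).charpoly.roots) =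
      ((Wᴴ * V * W) * (Wᴴ * U * W) * (Wᴴ * V * W)ᴴ * (Wᴴ * U * W)ᴴ).charpoly.roots +
        Multiset.replicate (n - m) 1) ∧
    (∀ LA : Matrix (Fin n) (Fin n) ℂ, ∀ LB : Matrix (Fin m) (Fin m) ℂ,
      (∀ μ ∈ spectrum ℂ ((P * V * P + (1 - P)) * (P * U * P + (1 - P)) *
          (P * V * P + (1 - P))ᴴ * (P * U * P + (1 - P))ᴴ), ¬ (μ.im = 0 ∧ μ.re ≤ 0)) →
      (∀ μ ∈ spectrum ℂ ((Wᴴ * V * W) * (Wᴴ * U * W) * (Wᴴ * V * W)ᴴ * (Wᴴ * U * W)ᴴ),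
          ¬ (μ.im = 0 ∧ μ.re ≤ 0)) →
      NormedSpace.exp LA = (P * V * P + (1 - P)) * (P * U * P + (1 - P)) *
          (P * V * P + (1 - P))ᴴ * (P * U * P + (1 - P))ᴴ →
      (∀ μ ∈ spectrum ℂ LA, -Real.pi < μ.im ∧ μ.im < Real.pi) →
      NormedSpace.exp LB = (Wᴴ * V * W) * (Wᴴ * U * W) * (Wᴴ * V * W)ᴴ * (Wᴴ * U * W)ᴴ →
      (∀ μ ∈ spectrum ℂ LB, -Real.pi < μ.im ∧ μ.im < Real.pi) →
      LA.trace = LB.trace) := by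
  have hA : P * U * P + (1 - P) = W * (Wᴴ * U * W) * Wᴴ + (1 - W * Wᴴ) := by
    rw [hP]; simp only [Matrix.mul_assoc]
  have hB : P * V * P + (1 - P) = W * (Wᴴ * V * W) * Wᴴ + (1 - W * Wᴴ) := by
    rw [hP]; simp only [Matrix.mul_assoc]
  have hAH : (P * U * P + (1 - P))ᴴ = W * ((Wᴴ * U * W)ᴴ) * Wᴴ + (1 - W * Wᴴ) := by
    rw [hP]
    simp only [conjTranspose_add, conjTranspose_sub, conjTranspose_one, conjTranspose_mul,
      conjTranspose_conjTranspose, Matrix.mul_assoc]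
  have hBH : (P * V * P + (1 - P))ᴴ = W * ((Wᴴ * V * W)ᴴ) * Wᴴ + (1 - W * Wᴴ) := by
    rw [hP]
    simp only [conjTranspose_add, conjTranspose_sub, conjTranspose_one, conjTranspose_mul,
      conjTranspose_conjTranspose, Matrix.mul_assoc]
  have hkey : (P * V * P + (1 - P)) * (P * U * P + (1 - P)) * (P * V * P + (1 - P))ᴴ *
        (P * U * P + (1 - P))ᴴ
      = W * ((Wᴴ * V * W) * (Wᴴ * U * W) * (Wᴴ * V * W)ᴴ * (Wᴴ * U * W)ᴴ) * Wᴴ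
        + (1 - W * Wᴴ) := by
    rw [hBH, hAH, hB, hA, compress_mul W hW, compress_mul W hW, compress_mul W hW]
  have hroots1 : (((P * V * P + (1 - P)) * (P * U * P + (1 - P)) * (P * V * P + (1 - P))ᴴ *
        (P * U * P + (1 - P))ᴴ).charpoly.roots) =
      ((Wᴴ * V * W) * (Wᴴ * U * W) * (Wᴴ * V * W)ᴴ * (Wᴴ * U * W)ᴴ).charpoly.roots +
        Multiset.replicate (n - m) 1 := by
    rw [hkey, roots_compress hmn W hW]
  refine ⟨hroots1, ?_⟩
  intro LA LB _ _ hexpA hstripLA hexpB hstripLB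
  have hRA := roots_charpoly_exp LA hstripLA
  rw [hexpA, hroots1] at hRA
  have hRB := roots_charpoly_exp LB hstripLB
  rw [hexpB] at hRB
  have hsumA := sum_log_exp_roots LA hstripLA
  have hsumB := sum_log_exp_roots LB hstripLB
  rw [← hsumA, ← hsumB, ← hRA, ← hRB, Multiset.map_add, Multiset.sum_add,
    Multiset.map_replicate, Complex.log_one, Multiset.sum_replicate, smul_zero, add_zero]
end
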